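/- arXiv:2107.02159 — 3 statements merged into one kernel-verified Lean document; each statement's English description precedes it below -/
import Mathlib

section
/- Let q be an odd positive integer and Q an integral quadratic form in d variables that is non-singular modulo q. Then for every a ∈ (ℤ/q)×, the group SO_Q(ℤ/q) acts transitively on the level set H_a(ℤ/q) = {x ∈ (ℤ/q)^d : Q(x) = a}: any solution can be mapped to any other by a product of at most two reflections lying in SO_Q(ℤ/q). -/
open Matrix

namespace Stmt8Aux
variable {d : ℕ} {R : Type*} [CommRing R]

lemma vecMulVec_mul_vecMulVec (a b c e : Fin d → R) :
    vecMulVec a b * vecMulVec c e = (b ⬝ᵥ c) • vecMulVec a e := by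
  ext i j
  simp only [mul_apply, vecMulVec_apply, Matrix.smul_apply, smul_eq_mul, dotProduct, Finset.sum_mul]
  exact Finset.sum_congr rfl fun k _ => by ring

lemma vecMulVec_mul (a b : Fin d → R) (N : Matrix (Fin d) (Fin d) R) :
    vecMulVec a b * N = vecMulVec a (Nᵀ *ᵥ b) := by
  ext i j
  simp only [mul_apply, vecMulVec_apply, mulVec, dotProduct, transpose_apply, Finset.mul_sum]
  exact Finset.sum_congr rfl fun k _ => by ring

lemma mul_vecMulVec (a b : Fin d → R) (N : Matrix (Fin d) (Fin d) R) :
    N * vecMulVec a b = vecMulVec (N *ᵥ a) b := by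
  ext i j
  simp only [mul_apply, vecMulVec_apply, mulVec, dotProduct, Finset.sum_mul]
  exact Finset.sum_congr rfl fun k _ => by ring

lemma vecMulVec_mulVec (a b x : Fin d → R) :
    vecMulVec a b *ᵥ x = (b ⬝ᵥ x) • a := by
  ext i
  simp only [mulVec, vecMulVec_apply, dotProduct, Pi.smul_apply, smul_eq_mul, Finset.sum_mul]
  exact Finset.sum_congr rfl fun k _ => by ring

lemma transpose_vecMulVec (a b : Fin d → R) : (vecMulVec a b)ᵀ = vecMulVec b a := by
  ext i j; simp [vecMulVec_apply, mul_comm]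

/-- generalized reflection along `w` with parameter `t` -/
noncomputable def refl (N : Matrix (Fin d) (Fin d) R) (w : Fin d → R) (t : R) :
    Matrix (Fin d) (Fin d) R :=
  1 + t • vecMulVec w (N *ᵥ w)

lemma refl_det (N : Matrix (Fin d) (Fin d) R) (w : Fin d → R) (t : R) :
    (refl N w t).det = 1 + t * (w ⬝ᵥ (N *ᵥ w)) := by
  have h : t • vecMulVec w (N *ᵥ w) = replicateCol (Fin 1) (t • w) * replicateRow (Fin 1) (N *ᵥ w) := by
    rw [← show vecMulVec (t • w) (N *ᵥ w) = replicateCol (Fin 1) (t • w) * replicateRow (Fin 1) (N *ᵥ w) from vecMulVec_eq _ _ _]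
    ext i j; simp [vecMulVec_apply]; ring
  rw [refl, h, show Matrix.det (1 + replicateCol (Fin 1) (t • w) * replicateRow (Fin 1) (N *ᵥ w)) = 1 + (N *ᵥ w) ⬝ᵥ (t • w) from det_one_add_replicateCol_mul_replicateRow _ _]
  rw [dotProduct_smul]
  rw [dotProduct_comm]
  simp [smul_eq_mul]

end Stmt8Aux

namespace Stmt8Aux
open Matrix
variable {d : ℕ} {R : Type*} [CommRing R]

lemma smul_vecMulVec (c : R) (a b : Fin d → R) :
    vecMulVec (c • a) b = c • vecMulVec a b := by
  ext i j; simp [vecMulVec_apply, mul_assoc]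

lemma refl_mulVec (N : Matrix (Fin d) (Fin d) R) (w : Fin d → R) (t : R) (x : Fin d → R) :
    refl N w t *ᵥ x = x + (t * ((N *ᵥ w) ⬝ᵥ x)) • w := by
  rw [refl, add_mulVec, one_mulVec, smul_mulVec, vecMulVec_mulVec, smul_smul]

lemma refl_orth (N : Matrix (Fin d) (Fin d) R) (hN : Nᵀ = N) (w : Fin d → R) (t : R)
    (ht : t * (2 + t * (w ⬝ᵥ (N *ᵥ w))) = 0) :
    (refl N w t)ᵀ * N * (refl N w t) = N := by
  have h1 : (refl N w t)ᵀ = 1 + t • vecMulVec (N *ᵥ w) w := by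
    rw [refl, transpose_add, transpose_one, transpose_smul, transpose_vecMulVec]
  rw [h1, refl]
  simp only [Matrix.add_mul, Matrix.mul_add, Matrix.one_mul, Matrix.mul_one,
    Matrix.smul_mul, Matrix.mul_smul, vecMulVec_mul, mul_vecMulVec,
    vecMulVec_mul_vecMulVec, hN, vecMulVec_mulVec, smul_vecMulVec]
  have hd : (N *ᵥ w) ⬝ᵥ w = w ⬝ᵥ (N *ᵥ w) := dotProduct_comm _ _
  rw [add_assoc]
  have hkey : t • vecMulVec (N *ᵥ w) (N *ᵥ w) +
      t • (vecMulVec (N *ᵥ w) (N *ᵥ w) +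
        t • (((N *ᵥ w) ⬝ᵥ w) • vecMulVec (N *ᵥ w) (N *ᵥ w))) =
      (t * (2 + t * (w ⬝ᵥ (N *ᵥ w)))) • vecMulVec (N *ᵥ w) (N *ᵥ w) := by
    rw [← hd]; module
  rw [hkey, ht, zero_smul, add_zero]

end Stmt8Aux

namespace Stmt8Aux
open Matrix
variable {d : ℕ} {R : Type*} [CommRing R]

lemma dotsym (N : Matrix (Fin d) (Fin d) R) (hN : Nᵀ = N) (x y : Fin d → R) :
    (N *ᵥ x) ⬝ᵥ y = x ⬝ᵥ (N *ᵥ y) := by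
  rw [dotProduct_mulVec, ← mulVec_transpose, hN, dotProduct_comm]

lemma orth_mul (N A B : Matrix (Fin d) (Fin d) R) (hA : Aᵀ * N * A = N)
    (hB : Bᵀ * N * B = N) : (A * B)ᵀ * N * (A * B) = N := by
  have h : (A * B)ᵀ * N * (A * B) = Bᵀ * (Aᵀ * N * A) * B := by
    rw [transpose_mul]; noncomm_ring
  rw [h, hA, hB]

lemma key (N : Matrix (Fin d) (Fin d) R) (hN : Nᵀ = N) (a : R) (ha : IsUnit a)
    (v₁ v₂ : Fin d → R) (h1 : v₁ ⬝ᵥ (N *ᵥ v₁) = a) (h2 : v₂ ⬝ᵥ (N *ᵥ v₂) = a)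
    (hcase : IsUnit ((v₁ + v₂) ⬝ᵥ (N *ᵥ (v₁ + v₂))) ∨
      (IsUnit ((v₁ - v₂) ⬝ᵥ (N *ᵥ (v₁ - v₂))) ∧
        ∃ w : Fin d → R, w ⬝ᵥ (N *ᵥ v₂) = 0 ∧ IsUnit (w ⬝ᵥ (N *ᵥ w)))) :
    ∃ g : Matrix (Fin d) (Fin d) R, g.det = 1 ∧ gᵀ * N * g = N ∧ g *ᵥ v₁ = v₂ := by
  obtain ⟨ai, hai⟩ := ha.exists_right_inv
  have hb' : v₂ ⬝ᵥ (N *ᵥ v₁) = v₁ ⬝ᵥ (N *ᵥ v₂) := by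
    rw [← dotsym N hN, dotProduct_comm]
  rcases hcase with hc | ⟨hc, w, hw0, hwu⟩
  · obtain ⟨ci, hci⟩ := hc.exists_right_inv
    have hcval : (v₁ + v₂) ⬝ᵥ (N *ᵥ (v₁ + v₂)) = 2 * a + 2 * (v₁ ⬝ᵥ (N *ᵥ v₂)) := by
      simp only [mulVec_add, dotProduct_add, add_dotProduct, h1, h2, hb']
      ring
    rw [hcval] at hci hc
    refine ⟨refl N v₂ (-(2 * ai)) * refl N (v₁ + v₂) (-(2 * ci)), ?_, ?_, ?_⟩
    · rw [det_mul, refl_det, refl_det, h2, hcval]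
      linear_combination (-2 + 4 * (2 * a + 2 * (v₁ ⬝ᵥ (N *ᵥ v₂))) * ci) * hai + 2 * hci
    · refine orth_mul N _ _ (refl_orth N hN _ _ ?_) (refl_orth N hN _ _ ?_)
      · rw [h2]; linear_combination 4 * ai * hai
      · rw [hcval]; linear_combination 4 * ci * hci
    · have einner : refl N (v₁ + v₂) (-(2 * ci)) *ᵥ v₁ = -v₂ := by
        rw [refl_mulVec, dotsym N hN]
        have e1 : -(2 * ci) * ((v₁ + v₂) ⬝ᵥ (N *ᵥ v₁)) = -1 := by
          simp only [add_dotProduct, h1, hb']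
          linear_combination -hci
        rw [e1]
        module
      rw [← mulVec_mulVec, einner, refl_mulVec, dotsym N hN]
      have e3 : -(2 * ai) * (v₂ ⬝ᵥ (N *ᵥ (-v₂))) = 2 := by
        rw [mulVec_neg, dotProduct_neg, h2]
        linear_combination 2 * hai
      rw [e3]
      module
  · obtain ⟨ci, hci⟩ := hc.exists_right_inv
    obtain ⟨wi, hwi⟩ := hwu.exists_right_inv
    have hcval : (v₁ - v₂) ⬝ᵥ (N *ᵥ (v₁ - v₂)) = 2 * a - 2 * (v₁ ⬝ᵥ (N *ᵥ v₂)) := by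
      simp only [mulVec_sub, dotProduct_sub, sub_dotProduct, h1, h2, hb']
      ring
    rw [hcval] at hci hc
    refine ⟨refl N w (-(2 * wi)) * refl N (v₁ - v₂) (-(2 * ci)), ?_, ?_, ?_⟩
    · rw [det_mul, refl_det, refl_det, hcval]
      linear_combination (-2 + 4 * (2 * a - 2 * (v₁ ⬝ᵥ (N *ᵥ v₂))) * ci) * hwi + 2 * hci
    · refine orth_mul N _ _ (refl_orth N hN _ _ ?_) (refl_orth N hN _ _ ?_)
      · linear_combination 4 * wi * hwi
      · rw [hcval]; linear_combination 4 * ci * hci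
    · have einner : refl N (v₁ - v₂) (-(2 * ci)) *ᵥ v₁ = v₂ := by
        rw [refl_mulVec, dotsym N hN]
        have e1 : -(2 * ci) * ((v₁ - v₂) ⬝ᵥ (N *ᵥ v₁)) = -1 := by
          simp only [sub_dotProduct, h1, hb']
          linear_combination -hci
        rw [e1]
        module
      rw [← mulVec_mulVec, einner, refl_mulVec, dotsym N hN, hw0]
      simp

end Stmt8Aux

namespace Stmt8Aux
open Matrix

/-- transfer of the quadratic-form evaluation along a ring hom -/
lemma map_quad {d : ℕ} {R S : Type*} [CommRing R] [CommRing S] (φ : R →+* S)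
    (N : Matrix (Fin d) (Fin d) R) (x y : Fin d → R) :
    φ (x ⬝ᵥ (N *ᵥ y)) = (φ ∘ x) ⬝ᵥ ((N.map φ) *ᵥ (φ ∘ y)) := by
  rw [φ.map_dotProduct]
  congr 1
  funext i
  exact φ.map_mulVec N y i

lemma det_vecMulVec_eq_zero {F : Type*} [Field F] {d : ℕ} (hd : 2 ≤ d) (u : Fin d → F) :
    (vecMulVec u u).det = 0 := by
  by_contra h
  have hu : IsUnit (vecMulVec u u) := (isUnit_iff_isUnit_det _).2 (isUnit_iff_ne_zero.2 h)
  have hr := rank_of_isUnit _ hu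
  have h1 : (vecMulVec u u).rank ≤ 1 := by
    rw [vecMulVec_eq (Fin 1)]
    exact le_trans (rank_mul_le_left _ _)
      (le_trans (rank_le_card_width _) (by simp))
  rw [hr] at h1
  simp only [Fintype.card_fin] at h1
  omega

lemma matrix_eq_of_quadratic {F : Type*} [Field F] {d : ℕ} (h2 : (2 : F) ≠ 0)
    (A : Matrix (Fin d) (Fin d) F) (hA : Aᵀ = A) (u : Fin d → F)
    (h : ∀ x : Fin d → F, x ⬝ᵥ (A *ᵥ x) = (u ⬝ᵥ x) ^ 2) :
    A = vecMulVec u u := by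
  have key : ∀ x y : Fin d → F, 2 * (x ⬝ᵥ (A *ᵥ y)) = 2 * ((u ⬝ᵥ x) * (u ⬝ᵥ y)) := by
    intro x y
    have hsym : y ⬝ᵥ (A *ᵥ x) = x ⬝ᵥ (A *ᵥ y) := by
      rw [← dotsym A hA, dotProduct_comm]
    have hxy := h (x + y)
    simp only [mulVec_add, dotProduct_add, add_dotProduct] at hxy
    rw [h x, h y, hsym] at hxy
    linear_combination hxy
  ext i j
  have := key (Pi.single i 1) (Pi.single j 1)
  simp only [single_dotProduct, dotProduct_single, one_mul, mul_one, mulVec_single_one] at this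
  rw [vecMulVec_apply]
  exact mul_left_cancel₀ h2 this

end Stmt8Aux

namespace Stmt8Aux
open Matrix

lemma isUnit_zmod_pp {p k : ℕ} (hp : p.Prime) (hk : k ≠ 0) (z : ZMod (p ^ k)) :
    IsUnit z ↔ ZMod.castHom (dvd_pow_self p hk) (ZMod p) z ≠ 0 := by
  haveI : NeZero (p ^ k) := ⟨pow_ne_zero k hp.pos.ne'⟩
  haveI : NeZero p := ⟨hp.pos.ne'⟩
  have hz : ((z.val : ℕ) : ZMod (p ^ k)) = z := by
    rw [ZMod.natCast_val, ZMod.cast_id]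
  have hφ : ZMod.castHom (dvd_pow_self p hk) (ZMod p) z = ((z.val : ℕ) : ZMod p) := by
    rw [← hz, map_natCast, hz]
  have h1 : IsUnit z ↔ Nat.Coprime z.val (p ^ k) := by
    conv_lhs => rw [← hz]
    rw [ZMod.isUnit_iff_coprime]
  rw [h1, hφ, Ne, ZMod.natCast_eq_zero_iff,
    Nat.coprime_pow_right_iff (Nat.pos_of_ne_zero hk), Nat.coprime_comm,
    hp.coprime_iff_not_dvd]

lemma two_ne_zero_zmod {p : ℕ} (hp : p.Prime) (hp2 : p ≠ 2) : (2 : ZMod p) ≠ 0 := by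
  haveI : NeZero p := ⟨hp.pos.ne'⟩
  intro h
  have : ((2 : ℕ) : ZMod p) = 0 := by exact_mod_cast h
  rw [ZMod.natCast_eq_zero_iff] at this
  exact hp2 ((Nat.prime_dvd_prime_iff_eq hp Nat.prime_two).1 this)

lemma exists_w {d p k : ℕ} (hd : 2 ≤ d) (hp : p.Prime) (hp2 : p ≠ 2) (hk : k ≠ 0)
    (N : Matrix (Fin d) (Fin d) (ZMod (p ^ k))) (hN : Nᵀ = N) (hNdet : IsUnit N.det)
    (a : ZMod (p ^ k)) (ha : IsUnit a) (v₂ : Fin d → ZMod (p ^ k))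
    (h2 : v₂ ⬝ᵥ (N *ᵥ v₂) = a) :
    ∃ w : Fin d → ZMod (p ^ k), w ⬝ᵥ (N *ᵥ v₂) = 0 ∧ IsUnit (w ⬝ᵥ (N *ᵥ w)) := by
  haveI : Fact p.Prime := ⟨hp⟩
  haveI : NeZero (p ^ k) := ⟨pow_ne_zero k hp.pos.ne'⟩
  set φ := ZMod.castHom (dvd_pow_self p hk) (ZMod p) with hφdef
  -- first find x with `IsUnit (a * Q x - B(x,v₂)^2)`
  have hx : ∃ x : Fin d → ZMod (p ^ k),
      IsUnit (a * (x ⬝ᵥ (N *ᵥ x)) - (x ⬝ᵥ (N *ᵥ v₂)) ^ 2) := by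
    by_contra hcon
    push_neg at hcon
    set N' := N.map φ with hN'def
    have hN' : N'ᵀ = N' := by rw [hN'def, ← Matrix.transpose_map, hN]
    set u := N' *ᵥ (φ ∘ v₂) with hudef
    have hall : ∀ x' : Fin d → ZMod p,
        x' ⬝ᵥ ((φ a • N') *ᵥ x') = (u ⬝ᵥ x') ^ 2 := by
      intro x'
      set x : Fin d → ZMod (p ^ k) := fun i => ((x' i).val : ZMod (p ^ k)) with hxdef
      have hφx : φ ∘ x = x' := by
        funext i
        show φ ((x' i).val : ZMod (p ^ k)) = x' i
        rw [ZMod.castHom_apply, ZMod.cast_natCast (dvd_pow_self p hk),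
          ZMod.natCast_val, ZMod.cast_id]
      have h0 : φ (a * (x ⬝ᵥ (N *ᵥ x)) - (x ⬝ᵥ (N *ᵥ v₂)) ^ 2) = 0 := by
        have := hcon x
        rw [isUnit_zmod_pp hp hk, not_not] at this
        exact this
      rw [map_sub, _root_.map_mul, map_pow, map_quad φ, map_quad φ, hφx, sub_eq_zero] at h0
      rw [← hN'def] at h0
      rw [smul_mulVec, dotProduct_smul, smul_eq_mul, h0]
      congr 1
      rw [hudef, dotProduct_comm, dotsym N' hN']
    have hA : (φ a • N') = vecMulVec u u := by
      apply matrix_eq_of_quadratic (two_ne_zero_zmod hp hp2)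
      · rw [transpose_smul, hN']
      · exact hall
    have hdet0 : (φ a • N').det = 0 := by rw [hA]; exact det_vecMulVec_eq_zero hd u
    have hdetu : IsUnit (φ a • N').det := by
      rw [det_smul, Fintype.card_fin]
      refine IsUnit.mul (IsUnit.pow d (ha.map φ)) ?_
      have hmd := φ.map_det N
      rw [RingHom.mapMatrix_apply] at hmd
      rw [hN'def, ← hmd]
      exact hNdet.map φ
    rw [hdet0] at hdetu
    exact not_isUnit_zero hdetu
  obtain ⟨x, hxu⟩ := hx
  refine ⟨a • x - (x ⬝ᵥ (N *ᵥ v₂)) • v₂, ?_, ?_⟩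
  · simp only [sub_dotProduct, smul_dotProduct, smul_eq_mul, h2]
    ring
  · have hsym : v₂ ⬝ᵥ (N *ᵥ x) = x ⬝ᵥ (N *ᵥ v₂) := by
      rw [← dotsym N hN, dotProduct_comm]
    have : (a • x - (x ⬝ᵥ (N *ᵥ v₂)) • v₂) ⬝ᵥ (N *ᵥ (a • x - (x ⬝ᵥ (N *ᵥ v₂)) • v₂)) =
        a * (a * (x ⬝ᵥ (N *ᵥ x)) - (x ⬝ᵥ (N *ᵥ v₂)) ^ 2) := by
      simp only [mulVec_sub, mulVec_smul, dotProduct_sub, sub_dotProduct, smul_dotProduct,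
        dotProduct_smul, smul_eq_mul, h2, hsym]
      ring
    rw [this]
    exact ha.mul hxu

end Stmt8Aux

namespace Stmt8Aux
open Matrix

lemma stmt_pp {d p k : ℕ} (hd : 2 ≤ d) (hp : p.Prime) (hp2 : p ≠ 2) (hk : k ≠ 0)
    (N : Matrix (Fin d) (Fin d) (ZMod (p ^ k))) (hN : Nᵀ = N) (hNdet : IsUnit N.det)
    (a : ZMod (p ^ k)) (ha : IsUnit a) (v₁ v₂ : Fin d → ZMod (p ^ k))
    (h1 : v₁ ⬝ᵥ (N *ᵥ v₁) = a) (h2 : v₂ ⬝ᵥ (N *ᵥ v₂) = a) :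
    ∃ g : Matrix (Fin d) (Fin d) (ZMod (p ^ k)),
      g.det = 1 ∧ gᵀ * N * g = N ∧ g *ᵥ v₁ = v₂ := by
  haveI : Fact p.Prime := ⟨hp⟩
  apply key N hN a ha v₁ v₂ h1 h2
  by_cases hc : IsUnit ((v₁ + v₂) ⬝ᵥ (N *ᵥ (v₁ + v₂)))
  · exact Or.inl hc
  · refine Or.inr ⟨?_, exists_w hd hp hp2 hk N hN hNdet a ha v₂ h2⟩
    have hb' : v₂ ⬝ᵥ (N *ᵥ v₁) = v₁ ⬝ᵥ (N *ᵥ v₂) := by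
      rw [← dotsym N hN, dotProduct_comm]
    have hsum : (v₁ + v₂) ⬝ᵥ (N *ᵥ (v₁ + v₂)) + (v₁ - v₂) ⬝ᵥ (N *ᵥ (v₁ - v₂)) = 4 * a := by
      simp only [mulVec_add, mulVec_sub, dotProduct_add, dotProduct_sub, add_dotProduct,
        sub_dotProduct, h1, h2, hb']
      ring
    rw [isUnit_zmod_pp hp hk] at hc ⊢
    rw [not_not] at hc
    set φ := ZMod.castHom (dvd_pow_self p hk) (ZMod p) with hφdef
    have hs := congrArg φ hsum
    rw [map_add, hc, zero_add, _root_.map_mul] at hs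
    rw [hs]
    apply mul_ne_zero
    · have h2z := two_ne_zero_zmod hp hp2
      have h4 : φ (4 : ZMod (p ^ k)) = (4 : ZMod p) := map_ofNat φ 4
      rw [h4, show (4 : ZMod p) = 2 * 2 by norm_num]
      exact mul_ne_zero h2z h2z
    · exact (ha.map φ).ne_zero

end Stmt8Aux

namespace Stmt8Aux
open Matrix

lemma main (d : ℕ) (hd : 2 ≤ d) (q : ℕ) : Odd q →
    ∀ N : Matrix (Fin d) (Fin d) (ZMod q), Nᵀ = N → IsUnit N.det →
    ∀ a : ZMod q, IsUnit a → ∀ v₁ v₂ : Fin d → ZMod q,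
    v₁ ⬝ᵥ (N *ᵥ v₁) = a → v₂ ⬝ᵥ (N *ᵥ v₂) = a →
    ∃ g : Matrix (Fin d) (Fin d) (ZMod q), g.det = 1 ∧ gᵀ * N * g = N ∧ g *ᵥ v₁ = v₂ := by
  induction q using Nat.recOnPosPrimePosCoprime with
  | prime_pow p k hp hk =>
    intro hodd N hN hNdet a ha v₁ v₂ h1 h2
    have hp2 : p ≠ 2 := by
      rintro rfl
      have hev : Even (2 ^ k) := (Nat.even_pow).2 ⟨even_two, hk.ne'⟩
      exact (Nat.not_odd_iff_even.2 hev) hodd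
    exact stmt_pp hd hp hp2 hk.ne' N hN hNdet a ha v₁ v₂ h1 h2
  | zero =>
    intro hodd
    simp at hodd
  | one =>
    intro _ N _ _ a _ v₁ v₂ _ _
    exact ⟨1, det_one, Subsingleton.elim _ _, Subsingleton.elim _ _⟩
  | coprime m n hm1 hn1 hmn IH1 IH2 =>
    intro hodd N hN hNdet a ha v₁ v₂ h1 h2
    obtain ⟨hom, hon⟩ := Nat.odd_mul.1 hodd
    haveI : NeZero (m * n) := ⟨by positivity⟩
    set e := ZMod.chineseRemainder hmn with hedef
    set π₁ := (RingHom.fst (ZMod m) (ZMod n)).comp e.toRingHom with hπ₁def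
    set π₂ := (RingHom.snd (ZMod m) (ZMod n)).comp e.toRingHom with hπ₂def
    have hinj : ∀ x y : ZMod (m * n), π₁ x = π₁ y → π₂ x = π₂ y → x = y := by
      intro x y hx hy
      exact e.injective (Prod.ext hx hy)
    have hmapdet : ∀ (φ : ZMod (m * n) →+* ZMod m), True := fun _ => trivial
    -- apply IH1
    have hNT1 : (N.map π₁)ᵀ = N.map π₁ := by rw [← Matrix.transpose_map, hN]
    have hNT2 : (N.map π₂)ᵀ = N.map π₂ := by rw [← Matrix.transpose_map, hN]
    have hdet1 : IsUnit (N.map π₁).det := by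
      have hmd := π₁.map_det N
      rw [RingHom.mapMatrix_apply] at hmd
      rw [← hmd]; exact hNdet.map π₁
    have hdet2 : IsUnit (N.map π₂).det := by
      have hmd := π₂.map_det N
      rw [RingHom.mapMatrix_apply] at hmd
      rw [← hmd]; exact hNdet.map π₂
    obtain ⟨g₁, hg₁det, hg₁orth, hg₁act⟩ :=
      IH1 hom (N.map π₁) hNT1 hdet1 (π₁ a) (ha.map π₁) (π₁ ∘ v₁) (π₁ ∘ v₂)
        (by rw [← map_quad π₁, h1]) (by rw [← map_quad π₁, h2])
    obtain ⟨g₂, hg₂det, hg₂orth, hg₂act⟩ :=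
      IH2 hon (N.map π₂) hNT2 hdet2 (π₂ a) (ha.map π₂) (π₂ ∘ v₁) (π₂ ∘ v₂)
        (by rw [← map_quad π₂, h1]) (by rw [← map_quad π₂, h2])
    set g : Matrix (Fin d) (Fin d) (ZMod (m * n)) :=
      Matrix.of (fun i j => e.symm (g₁ i j, g₂ i j)) with hgdef
    have hgm1 : g.map π₁ = g₁ := by
      ext i j
      simp only [hgdef, Matrix.map_apply, Matrix.of_apply, hπ₁def, RingHom.comp_apply,
        RingEquiv.toRingHom_eq_coe, RingHom.coe_coe, RingEquiv.apply_symm_apply,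
        RingHom.coe_fst]
    have hgm2 : g.map π₂ = g₂ := by
      ext i j
      simp only [hgdef, Matrix.map_apply, Matrix.of_apply, hπ₂def, RingHom.comp_apply,
        RingEquiv.toRingHom_eq_coe, RingHom.coe_coe, RingEquiv.apply_symm_apply,
        RingHom.coe_snd]
    have hminj : ∀ X Y : Matrix (Fin d) (Fin d) (ZMod (m * n)),
        X.map π₁ = Y.map π₁ → X.map π₂ = Y.map π₂ → X = Y := by
      intro X Y hXY1 hXY2
      ext i j
      refine hinj _ _ ?_ ?_
      · have := congrFun (congrFun hXY1 i) j
        simpa [Matrix.map_apply] using this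
      · have := congrFun (congrFun hXY2 i) j
        simpa [Matrix.map_apply] using this
    refine ⟨g, ?_, ?_, ?_⟩
    · refine hinj _ _ ?_ ?_
      · have hmd := π₁.map_det g
        rw [RingHom.mapMatrix_apply, hgm1] at hmd
        rw [hmd, hg₁det, _root_.map_one]
      · have hmd := π₂.map_det g
        rw [RingHom.mapMatrix_apply, hgm2] at hmd
        rw [hmd, hg₂det, _root_.map_one]
    · refine hminj _ _ ?_ ?_
      · rw [Matrix.map_mul, Matrix.map_mul, Matrix.transpose_map, hgm1, hg₁orth]
      · rw [Matrix.map_mul, Matrix.map_mul, Matrix.transpose_map, hgm2, hg₂orth]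
    · funext i
      refine hinj _ _ ?_ ?_
      · rw [π₁.map_mulVec, hgm1]
        have := congrFun hg₁act i
        simpa using this
      · rw [π₂.map_mulVec, hgm2]
        have := congrFun hg₂act i
        simpa using this

end Stmt8Aux

/-- Let `q` be odd and `Q` an integral quadratic form (companion matrix `M`) that is
non-singular modulo `q`. Then for every unit `a ∈ (ℤ/q)ˣ`, `SO_Q(ℤ/q)` acts
transitively on `{x : Q(x) = a}`. -/
theorem stmt8 (d q : ℕ) (hd : 2 ≤ d) (hq : Odd q) (hq0 : 0 < q)
    (M : Matrix (Fin d) (Fin d) ℤ) (hM : Mᵀ = M)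
    (hMdet : IsUnit ((M.det : ℤ) : ZMod q))
    (a : ZMod q) (ha : IsUnit a)
    (v₁ v₂ : Fin d → ZMod q)
    (h1 : v₁ ⬝ᵥ ((M.map (Int.cast : ℤ → ZMod q)) *ᵥ v₁) = a)
    (h2 : v₂ ⬝ᵥ ((M.map (Int.cast : ℤ → ZMod q)) *ᵥ v₂) = a) :
    ∃ g : Matrix (Fin d) (Fin d) (ZMod q), g.det = 1 ∧
      gᵀ * (M.map (Int.cast : ℤ → ZMod q)) * g = M.map (Int.cast : ℤ → ZMod q) ∧
      g *ᵥ v₁ = v₂ := by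
  have hcast : (Int.cast : ℤ → ZMod q) = ⇑(Int.castRingHom (ZMod q)) := rfl
  have hN : (M.map (Int.cast : ℤ → ZMod q))ᵀ = M.map (Int.cast : ℤ → ZMod q) := by
    rw [← Matrix.transpose_map, hM]
  have hNdet : IsUnit (M.map (Int.cast : ℤ → ZMod q)).det := by
    have hmd := (Int.castRingHom (ZMod q)).map_det M
    rw [RingHom.mapMatrix_apply] at hmd
    rw [hcast, ← hmd]
    exact hMdet
  exact Stmt8Aux.main d hd q hq (M.map (Int.cast : ℤ → ZMod q)) hN hNdet a ha v₁ v₂ h1 h2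
end

section
/- Let p be an odd prime, k ≥ 1, and Q an integral quadratic form in d variables whose companion matrix M has determinant a unit mod p. Then the natural reduction map SO_Q(ℤ/p^{k+1}) → SO_Q(ℤ/p^k) is surjective. -/
open Matrix


theorem lemA (p k : ℕ) [Fact p.Prime] (a : ZMod (p^(k+1)))
    (ha : ZMod.castHom (pow_dvd_pow p (Nat.le_succ k)) (ZMod (p^k)) a = 0) :
    a = ((p^k : ℕ) : ZMod (p^(k+1))) * ((a.val / p^k : ℕ) : ZMod (p^(k+1))) := by
  haveI : NeZero (p^k) := ⟨pow_ne_zero _ (Fact.out : p.Prime).ne_zero⟩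
  haveI : NeZero (p^(k+1)) := ⟨pow_ne_zero _ (Fact.out : p.Prime).ne_zero⟩
  have h1 : ((a.val : ℕ) : ZMod (p^k)) = 0 := by
    rw [ZMod.natCast_val]; rw [ZMod.castHom_apply] at ha; exact ha
  have h2 : p^k ∣ a.val := (ZMod.natCast_eq_zero_iff _ _).mp h1
  have h3 : p^k * (a.val / p^k) = a.val := Nat.mul_div_cancel' h2
  have h4 : a = ((p^k * (a.val / p^k) : ℕ) : ZMod (p^(k+1))) := by
    rw [h3, ZMod.natCast_val, ZMod.cast_id]
  conv_lhs => rw [h4, Nat.cast_mul]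


theorem lemC (p m : ℕ) [Fact p.Prime] (a : ℤ) (hd : ¬ (p:ℤ) ∣ a) :
    IsUnit ((a : ZMod (p^m))) := by
  haveI : NeZero (p^m) := ⟨pow_ne_zero _ (Fact.out : p.Prime).ne_zero⟩
  have hnd : ¬ p ∣ a.natAbs := by
    intro h
    exact hd (dvd_trans (Int.natCast_dvd_natCast.mpr h) (Int.natAbs_dvd.mpr dvd_rfl))
  have hcop : Nat.Coprime a.natAbs (p^m) :=
    Nat.Coprime.pow_right _ (((Fact.out : p.Prime).coprime_iff_not_dvd.mpr hnd).symm)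
  have hu : IsUnit ((a.natAbs : ZMod (p^m))) := (ZMod.isUnit_iff_coprime _ _).mpr hcop
  rcases Int.natAbs_eq a with h | h
  · rw [h, Int.cast_natCast]; exact hu
  · rw [h, Int.cast_neg, Int.cast_natCast]; exact hu.neg
theorem lemD (p k : ℕ) [Fact p.Prime] (hk : 1 ≤ k) (x : ZMod (p^(k+1)))
    (hx : ZMod.castHom (pow_dvd_pow p (Nat.le_succ k)) (ZMod (p^k)) x = 1) :
    IsUnit x := by
  haveI : NeZero (p^k) := ⟨pow_ne_zero _ (Fact.out : p.Prime).ne_zero⟩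
  haveI : NeZero (p^(k+1)) := ⟨pow_ne_zero _ (Fact.out : p.Prime).ne_zero⟩
  have hval : ((x.val : ℕ) : ZMod (p^(k+1))) = x := by rw [ZMod.natCast_val, ZMod.cast_id]
  have hπ : ((x.val : ℕ) : ZMod (p^k)) = 1 := by
    rw [ZMod.natCast_val]; rw [ZMod.castHom_apply] at hx; exact hx
  have hnd : ¬ p ∣ x.val := by
    intro h
    have h1 : ((x.val - 1 : ℤ) : ZMod (p^k)) = 0 := by push_cast [hπ]; ring
    have h2 : ((p:ℤ))^k ∣ (x.val : ℤ) - 1 := by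
      have := (ZMod.intCast_zmod_eq_zero_iff_dvd _ _).mp h1
      rwa [Nat.cast_pow] at this
    have h3 : (p:ℤ) ∣ (x.val : ℤ) - 1 := dvd_trans (dvd_pow_self _ (by omega)) h2
    have h4 : (p:ℤ) ∣ (x.val : ℤ) := by exact_mod_cast h
    have h5 : (p:ℤ) ∣ 1 := by have := dvd_sub h4 h3; simpa using this
    have := Int.le_of_dvd (by norm_num) h5
    have := (Fact.out : p.Prime).two_le
    omega
  have hcop : Nat.Coprime x.val (p^(k+1)) :=
    Nat.Coprime.pow_right _ (((Fact.out : p.Prime).coprime_iff_not_dvd.mpr hnd).symm)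
  rw [← hval]
  exact (ZMod.isUnit_iff_coprime _ _).mpr hcop


theorem lemB (p k : ℕ) [Fact p.Prime] (hp : p ≠ 2) (hk : 1 ≤ k)
    (a : ZMod (p^(k+1))) (ha2 : a * a = 1)
    (haπ : ZMod.castHom (pow_dvd_pow p (Nat.le_succ k)) (ZMod (p^k)) a = 1) :
    a = 1 := by
  haveI : NeZero (p^k) := ⟨pow_ne_zero _ (Fact.out : p.Prime).ne_zero⟩
  haveI : NeZero (p^(k+1)) := ⟨pow_ne_zero _ (Fact.out : p.Prime).ne_zero⟩
  have hpZ : Prime (p : ℤ) := Nat.prime_iff_prime_int.mp Fact.out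
  set n : ℤ := (a.val : ℤ) with hn
  have hcast : ((n : ℤ) : ZMod (p^(k+1))) = a := by
    rw [hn]; push_cast; rw [ZMod.natCast_val, ZMod.cast_id]
  have hdvd : ((p : ℤ))^(k+1) ∣ (n - 1) * (n + 1) := by
    have : ((n * n - 1 : ℤ) : ZMod (p^(k+1))) = 0 := by
      push_cast [hcast]; rw [ha2]; ring
    have := (ZMod.intCast_zmod_eq_zero_iff_dvd _ _).mp this
    rw [Nat.cast_pow] at this
    convert this using 1; ring
  have hp2 : ¬ ((p:ℤ) ∣ (n - 1) ∧ (p:ℤ) ∣ (n + 1)) := by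
    rintro ⟨h1, h2⟩
    have : (p:ℤ) ∣ 2 := by have := dvd_sub h2 h1; simpa using this
    have h2 : p ∣ 2 := by exact_mod_cast this
    have := Nat.le_of_dvd (by norm_num) h2
    have := (Fact.out : p.Prime).two_le
    omega
  have hodd : (p:ℤ) ∣ (n-1)*(n+1) := dvd_trans (dvd_pow_self _ (Nat.succ_ne_zero k)) hdvd
  rcases hpZ.dvd_mul.mp hodd with h | h
  · -- p ∣ n - 1, so p ∤ n + 1, so p^(k+1) ∣ n - 1
    have hnd : ¬ (p:ℤ) ∣ (n + 1) := fun h' => hp2 ⟨h, h'⟩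
    have := hpZ.pow_dvd_of_dvd_mul_right (k+1) hnd hdvd
    have : ((n - 1 : ℤ) : ZMod (p^(k+1))) = 0 := by
      rw [ZMod.intCast_zmod_eq_zero_iff_dvd]; exact_mod_cast this
    have : a - 1 = 0 := by rw [← hcast]; push_cast at this ⊢; exact this
    linear_combination this
  · -- p ∣ n + 1; then p ∤ n - 1 so p^(k+1) ∣ n + 1; a = -1, contradiction with haπ
    have hnd : ¬ (p:ℤ) ∣ (n - 1) := fun h' => hp2 ⟨h', h⟩
    have hd : ((p:ℤ))^(k+1) ∣ (n + 1) := hpZ.pow_dvd_of_dvd_mul_left (k+1) hnd hdvd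
    have : ((n + 1 : ℤ) : ZMod (p^(k+1))) = 0 := by
      rw [ZMod.intCast_zmod_eq_zero_iff_dvd]; exact_mod_cast hd
    have ha : a = -1 := by
      have : a + 1 = 0 := by rw [← hcast]; push_cast at this ⊢; exact this
      linear_combination this
    rw [ha] at haπ
    have haπ' : (-1 : ZMod (p^k)) = 1 := by rw [map_neg, _root_.map_one] at haπ; exact haπ
    have h1 : ((2 : ℤ) : ZMod (p^k)) = 0 := by
      push_cast; linear_combination -haπ'
    have h2 : (p:ℤ)^k ∣ 2 := by
      have := (ZMod.intCast_zmod_eq_zero_iff_dvd _ _).mp h1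
      rwa [Nat.cast_pow] at this
    have h3 : (p:ℤ)^k ≤ 2 := Int.le_of_dvd (by norm_num) h2
    have hp3 : 3 ≤ p := by
      have := (Fact.out : p.Prime).two_le
      omega
    have : (3:ℤ) ≤ (p:ℤ)^k := by
      calc (3:ℤ) ≤ (p:ℤ) := by exact_mod_cast hp3
        _ = (p:ℤ)^1 := (pow_one _).symm
        _ ≤ (p:ℤ)^k := pow_le_pow_right₀ (by exact_mod_cast hp3.trans' (by norm_num)) hk
    omega


/-- Let `p` be an odd prime, `k ≥ 1`, and `Q(x) = xᵀMx` with `M` integral symmetric and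
`p ∤ det M`. Then the reduction map `SO_Q(ℤ/p^{k+1}) → SO_Q(ℤ/p^k)` is surjective. -/
theorem stmt10 (p k d : ℕ) [Fact p.Prime] (hp : p ≠ 2) (hk : 1 ≤ k)
    (M : Matrix (Fin d) (Fin d) ℤ) (hM : Mᵀ = M) (hMdet : ¬ (p : ℤ) ∣ M.det)
    (gbar : Matrix (Fin d) (Fin d) (ZMod (p ^ k)))
    (hdet : gbar.det = 1)
    (horth : gbarᵀ * M.map (Int.cast : ℤ → ZMod (p ^ k)) * gbar
      = M.map (Int.cast : ℤ → ZMod (p ^ k))) :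
    ∃ g : Matrix (Fin d) (Fin d) (ZMod (p ^ (k + 1))),
      g.det = 1 ∧
      gᵀ * M.map (Int.cast : ℤ → ZMod (p ^ (k + 1))) * g
        = M.map (Int.cast : ℤ → ZMod (p ^ (k + 1))) ∧
      g.map (ZMod.castHom (pow_dvd_pow p (Nat.le_succ k)) (ZMod (p ^ k))) = gbar := by
  haveI : NeZero (p^k) := ⟨pow_ne_zero _ (Fact.out : p.Prime).ne_zero⟩
  haveI : NeZero (p^(k+1)) := ⟨pow_ne_zero _ (Fact.out : p.Prime).ne_zero⟩
  set π : ZMod (p^(k+1)) →+* ZMod (p^k) :=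
    ZMod.castHom (pow_dvd_pow p (Nat.le_succ k)) (ZMod (p^k)) with hπdef
  set M' : Matrix (Fin d) (Fin d) (ZMod (p^(k+1))) :=
    M.map (Int.cast : ℤ → ZMod (p^(k+1))) with hM'def
  set F : Matrix (Fin d) (Fin d) (ZMod (p^(k+1))) :=
    gbar.map (fun x => ((x.val : ℕ) : ZMod (p^(k+1)))) with hFdef
  have hFπ : F.map π = gbar := by
    ext i j
    simp [hFdef, Matrix.map_apply, map_natCast, ZMod.natCast_val, ZMod.cast_id]
  have hM'π : M'.map π = M.map (Int.cast : ℤ → ZMod (p^k)) := by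
    ext i j
    simp [hM'def, Matrix.map_apply, map_intCast]
  have hMsym' : M'ᵀ = M' := by
    rw [hM'def, ← Matrix.transpose_map, hM]
  have hM'det : M'.det = ((M.det : ℤ) : ZMod (p^(k+1))) := by
    rw [hM'def]
    rw [show M.map (Int.cast : ℤ → ZMod (p^(k+1)))
        = (Int.castRingHom (ZMod (p^(k+1)))).mapMatrix M from rfl]
    rw [← RingHom.map_det]; rfl
  have hMu : IsUnit M'.det := by rw [hM'det]; exact lemC p (k+1) M.det hMdet
  have hFu : IsUnit F.det := by
    apply lemD p k hk
    show π F.det = 1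
    rw [RingHom.map_det, RingHom.mapMatrix_apply, hFπ, hdet]
  have h2u : IsUnit (2 : ZMod (p^(k+1))) := by
    have h2 : ¬ (p:ℤ) ∣ 2 := by
      intro h
      have h' : p ∣ 2 := by exact_mod_cast h
      have := Nat.le_of_dvd (by norm_num) h'
      have := (Fact.out : p.Prime).two_le
      omega
    have := lemC p (k+1) 2 h2
    simpa using this
  -- the error matrix
  set E' : Matrix (Fin d) (Fin d) (ZMod (p^(k+1))) := Fᵀ * M' * F - M' with hE'def
  have hE'π : E'.map π = 0 := by
    rw [hE'def]
    have : (Fᵀ * M' * F - M').map ⇑π = (F.map ⇑π)ᵀ * M'.map ⇑π * F.map ⇑π - M'.map ⇑π := by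
      have h1 : (Fᵀ * M' * F - M').map ⇑π = (Fᵀ * M' * F).map ⇑π - M'.map ⇑π := by
        exact Matrix.map_sub _ (map_sub π) _ _
      rw [h1, Matrix.map_mul, Matrix.map_mul, show Fᵀ.map ⇑π = (F.map ⇑π)ᵀ from Matrix.transpose_map]
    rw [this, hFπ, hM'π, horth, sub_self]
  set E : Matrix (Fin d) (Fin d) (ZMod (p^(k+1))) :=
    E'.map (fun a => ((a.val / p^k : ℕ) : ZMod (p^(k+1)))) with hEdef
  set c : ZMod (p^(k+1)) := ((p^k : ℕ) : ZMod (p^(k+1))) with hcdef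
  have hE : E' = c • E := by
    ext i j
    have hz : π (E' i j) = 0 := by
      have := congrFun (congrFun hE'π i) j
      simpa [Matrix.map_apply] using this
    have := lemA p k (E' i j) hz
    simpa [hEdef, hcdef, Matrix.smul_apply, Matrix.map_apply, smul_eq_mul] using this
  have hcc : c * c = 0 := by
    rw [hcdef, ← Nat.cast_mul]
    rw [show ((p^k * p^k : ℕ) : ZMod (p^(k+1))) = 0 ↔ p^(k+1) ∣ p^k * p^k from
      ZMod.natCast_eq_zero_iff _ _]
    rw [← pow_add]
    exact pow_dvd_pow p (by omega)
  -- the correction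
  set X : Matrix (Fin d) (Fin d) (ZMod (p^(k+1))) := M'⁻¹ * ((Fᵀ)⁻¹ * E') with hXdef
  set u : ZMod (p^(k+1)) := Ring.inverse (2 : ZMod (p^(k+1))) with hudef
  set g : Matrix (Fin d) (Fin d) (ZMod (p^(k+1))) := F - u • X with hgdef
  have hMM : M' * M'⁻¹ = 1 := Matrix.mul_nonsing_inv _ hMu
  have hMM' : M'⁻¹ * M' = 1 := Matrix.nonsing_inv_mul _ hMu
  have hFtu : IsUnit (Fᵀ).det := by rwa [Matrix.det_transpose]
  have hFF : Fᵀ * (Fᵀ)⁻¹ = 1 := Matrix.mul_nonsing_inv _ hFtu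
  have hFF' : F⁻¹ * F = 1 := Matrix.nonsing_inv_mul _ hFu
  have hE'sym : E'ᵀ = E' := by
    rw [hE'def]
    simp [Matrix.transpose_sub, Matrix.transpose_mul, Matrix.transpose_transpose,
      hMsym', Matrix.mul_assoc]
  have hXt : Xᵀ = E' * (F⁻¹ * M'⁻¹) := by
    rw [hXdef]
    simp [Matrix.transpose_mul, Matrix.transpose_nonsing_inv, Matrix.transpose_transpose,
      hE'sym, hMsym', Matrix.mul_assoc]
  have hFMX : Fᵀ * M' * X = E' := by
    have h : Fᵀ * M' * X = Fᵀ * ((M' * M'⁻¹) * ((Fᵀ)⁻¹ * E')) := by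
      rw [hXdef]; simp only [Matrix.mul_assoc]
    rw [h, hMM, Matrix.one_mul, ← Matrix.mul_assoc, hFF, Matrix.one_mul]
  have hXMF : Xᵀ * M' * F = E' := by
    rw [hXt]
    have h : E' * (F⁻¹ * M'⁻¹) * M' * F = E' * (F⁻¹ * ((M'⁻¹ * M') * F)) := by
      simp only [Matrix.mul_assoc]
    rw [h, hMM', Matrix.one_mul, ← Matrix.mul_assoc, Matrix.mul_assoc, hFF', Matrix.mul_one]
  have hXMX : Xᵀ * M' * X = 0 := by
    rw [hXt, hXdef, hE]
    simp only [Matrix.smul_mul, Matrix.mul_smul, smul_smul, hcc, zero_smul]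
  -- orthogonality
  have hgt : gᵀ = Fᵀ - u • Xᵀ := by
    rw [hgdef, Matrix.transpose_sub, Matrix.transpose_smul]
  have hFMF : Fᵀ * M' * F = M' + E' := by rw [hE'def]; abel
  have huu : u • E' + u • E' = E' := by
    rw [← add_smul, ← two_mul, hudef, Ring.mul_inverse_cancel _ h2u, one_smul]
  have horth' : gᵀ * M' * g = M' := by
    have e1 : gᵀ * M' = Fᵀ * M' - u • (Xᵀ * M') := by
      rw [hgt, Matrix.sub_mul, Matrix.smul_mul]
    have e2 : gᵀ * M' * g
        = (Fᵀ * M' * F - u • (Fᵀ * M' * X)) - (u • (Xᵀ * M' * F) - u • (u • (Xᵀ * M' * X))) := by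
      rw [e1, Matrix.sub_mul, hgdef, Matrix.mul_sub, Matrix.mul_sub,
        Matrix.smul_mul, Matrix.mul_smul, Matrix.mul_smul, Matrix.smul_mul]
    rw [e2, hFMX, hXMF, hXMX, smul_zero, smul_zero, sub_zero, hFMF, sub_sub, huu,
      add_sub_cancel_right]
  -- map of g
  have hXπ : X.map ⇑π = 0 := by
    have hm : π.mapMatrix X = π.mapMatrix M'⁻¹ * (π.mapMatrix (Fᵀ)⁻¹ * π.mapMatrix E') := by
      rw [hXdef, _root_.map_mul, _root_.map_mul]
    rw [← RingHom.mapMatrix_apply, hm, RingHom.mapMatrix_apply, RingHom.mapMatrix_apply,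
      RingHom.mapMatrix_apply, hE'π, mul_zero, mul_zero]
  have hgπ : g.map ⇑π = gbar := by
    ext i j
    have hx : π (X i j) = 0 := by
      have := congrFun (congrFun hXπ i) j; simpa [Matrix.map_apply] using this
    have hf : π (F i j) = gbar i j := by
      have := congrFun (congrFun hFπ i) j; simpa [Matrix.map_apply] using this
    rw [hgdef]
    simp [Matrix.map_apply, Matrix.sub_apply, Matrix.smul_apply, smul_eq_mul,
      _root_.map_sub, _root_.map_mul, hx, hf]
  -- determinant
  have hdet2 : g.det * g.det = 1 := by
    have h := congrArg Matrix.det horth'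
    rw [Matrix.det_mul, Matrix.det_mul, Matrix.det_transpose] at h
    apply hMu.mul_left_cancel
    rw [mul_one]
    linear_combination h
  have hgπdet : π g.det = 1 := by
    rw [RingHom.map_det, RingHom.mapMatrix_apply, hgπ, hdet]
  have hgdet : g.det = 1 := lemB p k hp hk g.det hdet2 hgπdet
  exact ⟨g, hgdet, horth', hgπ⟩
end

section
/- Let Q be a non-degenerate integral quadratic form with companion matrix M, g ∈ SL_d(ℤ), ĝ the d×(d-1) matrix of the first d-1 columns of g, and γ ∈ SL_{d-1}(ℚ). Then the determinant of the companion matrix γᵗ ĝᵗ M⁻¹ ĝ γ of the quadratic form φ_g^γ = Q*∘g∘γ on ℚ^{d-1} equals Q(τ(g)) / det(M), where τ(g) = (gᵗ)⁻¹e_d and Q*(x) = xᵗM⁻¹x. -/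
open Matrix

/-- Let `Q` be a non-degenerate integral quadratic form with companion matrix `M`,
`g ∈ SL_d(ℤ)`, `ĝ` the first `d-1` columns of `g`, and `γ ∈ SL_{d-1}(ℚ)`. Then the
determinant of the companion matrix `γᵀ ĝᵀ M⁻¹ ĝ γ` of `φ_g^γ = Q* ∘ g ∘ γ` equals
`Q(τ(g)) / det M`, where `τ(g) = (gᵀ)⁻¹ e_d`. -/
theorem stmt12 (d : ℕ) (hd : 1 ≤ d)
    (M : Matrix (Fin (d + 1)) (Fin (d + 1)) ℤ) (hM : Mᵀ = M) (hMdet : M.det ≠ 0)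
    (g : Matrix (Fin (d + 1)) (Fin (d + 1)) ℤ) (hg : g.det = 1)
    (γ : Matrix (Fin d) (Fin d) ℚ) (hγ : γ.det = 1)
    (τ : Fin (d + 1) → ℚ)
    (hτ : τ = ((g.map (Int.cast : ℤ → ℚ))ᵀ)⁻¹ *ᵥ Pi.single (Fin.last d) 1) :
    (γᵀ * ((g.map (Int.cast : ℤ → ℚ)).submatrix id Fin.castSucc)ᵀ
        * (M.map (Int.cast : ℤ → ℚ))⁻¹
        * ((g.map (Int.cast : ℤ → ℚ)).submatrix id Fin.castSucc) * γ).det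
      = (τ ⬝ᵥ ((M.map (Int.cast : ℤ → ℚ)) *ᵥ τ)) / (M.map (Int.cast : ℤ → ℚ)).det := by
  set G : Matrix (Fin (d+1)) (Fin (d+1)) ℚ := g.map (Int.cast : ℤ → ℚ) with hG
  set N : Matrix (Fin (d+1)) (Fin (d+1)) ℚ := M.map (Int.cast : ℤ → ℚ) with hN
  have hcast : (Int.cast : ℤ → ℚ) = ⇑(Int.castRingHom ℚ) := rfl
  have hGdet : G.det = 1 := by
    have := (RingHom.map_det (Int.castRingHom ℚ) g)
    simp only [RingHom.mapMatrix_apply] at this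
    rw [hG, hcast, ← this, hg]; simp
  have hNdet : N.det ≠ 0 := by
    have := (RingHom.map_det (Int.castRingHom ℚ) M)
    simp only [RingHom.mapMatrix_apply] at this
    rw [hN, hcast, ← this]
    simpa using hMdet
  have hGunit : IsUnit G.det := by rw [hGdet]; exact isUnit_one
  have hNunit : IsUnit N.det := isUnit_iff_ne_zero.mpr hNdet
  set B : Matrix (Fin (d+1)) (Fin (d+1)) ℚ := Gᵀ * N⁻¹ * G with hB
  have hsub : γᵀ * (G.submatrix id Fin.castSucc)ᵀ * N⁻¹ * (G.submatrix id Fin.castSucc) * γ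
      = γᵀ * (B.submatrix Fin.castSucc Fin.castSucc) * γ := by
    congr 1
    rw [Matrix.mul_assoc, Matrix.mul_assoc]
    congr 1
    ext i j
    simp only [hB, Matrix.mul_apply, Matrix.submatrix_apply, Matrix.transpose_apply, id_eq,
      Finset.sum_mul, Finset.mul_sum]
    rw [Finset.sum_comm]
    apply Finset.sum_congr rfl; intros; apply Finset.sum_congr rfl; intros; ring
  rw [hsub, Matrix.det_mul, Matrix.det_mul, Matrix.det_transpose, hγ, one_mul, mul_one]
  have hadj : (B.submatrix Fin.castSucc Fin.castSucc).det
      = B.adjugate (Fin.last d) (Fin.last d) := by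
    rw [Matrix.adjugate_fin_succ_eq_det_submatrix]
    simp [Fin.succAbove_last]
  have hBdet : B.det = N.det⁻¹ := by
    rw [hB, Matrix.det_mul, Matrix.det_mul, Matrix.det_transpose, hGdet,
      Matrix.det_nonsing_inv, Ring.inverse_eq_inv]
    ring
  have hBinv : B⁻¹ = G⁻¹ * N * (Gᵀ)⁻¹ := by
    rw [hB, Matrix.mul_inv_rev, Matrix.mul_inv_rev, Matrix.nonsing_inv_nonsing_inv _ hNunit,
      Matrix.mul_assoc]
  have hBdetne : B.det ≠ 0 := by rw [hBdet]; exact inv_ne_zero hNdet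
  have hBunit : IsUnit B.det := isUnit_iff_ne_zero.mpr hBdetne
  have hadj2 : B.adjugate (Fin.last d) (Fin.last d) = B.det * B⁻¹ (Fin.last d) (Fin.last d) := by
    rw [Matrix.nonsing_inv_apply B hBunit, Matrix.smul_apply, smul_eq_mul, ← mul_assoc,
      IsUnit.mul_val_inv, one_mul]
  have hentry : B⁻¹ (Fin.last d) (Fin.last d) = τ ⬝ᵥ N *ᵥ τ := by
    have key : B⁻¹ (Fin.last d) (Fin.last d)
        = Pi.single (Fin.last d) (1:ℚ) ⬝ᵥ B⁻¹ *ᵥ Pi.single (Fin.last d) 1 := by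
      simp [Matrix.mulVec, dotProduct, Pi.single_apply]
    rw [key, hBinv, hτ, Matrix.mul_assoc]
    simp only [← Matrix.mulVec_mulVec]
    rw [dotProduct_mulVec, ← Matrix.mulVec_transpose, Matrix.transpose_nonsing_inv]
  rw [hadj, hadj2, hBdet, hentry]
  field_simp
end
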